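/- Under Condition 1, if the exploration length satisfies T1 ≥ |U_E|, then for all S_i ≠ S_j ∈ U_E the ATE estimator produced by UCB-TSN satisfies E[|Δ̂_T^{(i,j)} − Δ^{(i,j)}|] ≤ 2·√(4·log(T1·|U_E|)/⌊T1/|U_E|⌋) + 1/T1; in particular E[|Δ̂_T^{(i,j)} − Δ^{(i,j)}|] = Õ(√(|U_E|/T1)). -/

import Mathlib

open MeasureTheory Finset

namespace MABN

/-- A super arm: an assignment of one of `K` arms to each of `N` units. -/
abbrev SuperArm (N K : ℕ) := Fin N → Fin K

/-- A bandit instance: potential outcomes `Y_i(A) ∈ [0,1]` for each unit `i` and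
super arm `A`. -/
structure BanditInstance (N K : ℕ) where
  Y : SuperArm N K → Fin N → ℝ
  Y_mem : ∀ A i, Y A i ∈ Set.Icc (0 : ℝ) 1

section Defs

variable {N K : ℕ} {E : Type} [Fintype E] [DecidableEq E] {Ω : Type} [MeasurableSpace Ω]

/-- The exposure super arm `(S(i, A, H))_{i ∈ [N]}` induced by super arm `A`. -/
def expArm (Smap : Fin N → SuperArm N K → E) (A : SuperArm N K) : Fin N → E :=
  fun i => Smap i A

/-- `U_O`: exposure super arms realizable by some super arm. -/
def UO (Smap : Fin N → SuperArm N K → E) : Finset (Fin N → E) :=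
  Finset.image (expArm Smap) Finset.univ

/-- `U_C`: cluster-wise switchback exposure super arms of the clustering `Cl`. -/
def UC {c : ℕ} (Cl : Fin N → Fin c) : Finset (Fin N → E) :=
  Finset.univ.filter fun S => ∀ i j, Cl i = Cl j → S i = S j

/-- `U_E = U_C ∩ U_O`. -/
def UE (Smap : Fin N → SuperArm N K → E) {c : ℕ} (Cl : Fin N → Fin c) :
    Finset (Fin N → E) := UC Cl ∩ UO Smap

/-- Super arms compatible with a given exposure super arm. -/
def compat (Smap : Fin N → SuperArm N K → E) (S : Fin N → E) : Finset (SuperArm N K) :=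
  Finset.univ.filter fun A => expArm Smap A = S

/-- Exposure potential outcome `Ỹ_i(S)`: the average of `Y_i(A)` over super arms
compatible with `S` (compatible super arms are sampled uniformly). -/
noncomputable def tildeY (ν : BanditInstance N K) (Smap : Fin N → SuperArm N K → E)
    (i : Fin N) (S : Fin N → E) : ℝ :=
  (∑ A ∈ compat Smap S, ν.Y A i) / (compat Smap S).card

/-- Unit-averaged exposure potential outcome `(1/N) ∑_i Ỹ_i(S)`. -/
noncomputable def mS (ν : BanditInstance N K) (Smap : Fin N → SuperArm N K → E)
    (S : Fin N → E) : ℝ :=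
  (1 / (N : ℝ)) * ∑ i, tildeY ν Smap i S

/-- ATE between exposure super arms:
`Δ^{(i,j)} = (1/N) ∑_{i'} (Ỹ_{i'}(S_i) − Ỹ_{i'}(S_j))`. -/
noncomputable def ate (ν : BanditInstance N K) (Smap : Fin N → SuperArm N K → E)
    (Si Sj : Fin N → E) : ℝ :=
  (1 / (N : ℝ)) * ∑ i, (tildeY ν Smap i Si - tildeY ν Smap i Sj)

/-- Unit-averaged realized reward `(1/N) ∑_i r_{i,t}` at round `t`. -/
noncomputable def avgRew (r : ℕ → Fin N → Ω → ℝ) (t : ℕ) (ω : Ω) : ℝ :=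
  (1 / (N : ℝ)) * ∑ i, r t i ω

/-- `N_S^t`: number of times exposure super arm `S` was played in the first `t` rounds. -/
def cnt (Sel : ℕ → Ω → Fin N → E) (S : Fin N → E) (t : ℕ) (ω : Ω) : ℕ :=
  ((Finset.range t).filter fun τ => Sel τ ω = S).card

/-- `R̂_t(S)`: empirical mean of the unit-averaged exposure rewards over the rounds
(among the first `t`) in which `S` was played. -/
noncomputable def empMean (Sel : ℕ → Ω → Fin N → E) (r : ℕ → Fin N → Ω → ℝ)
    (t : ℕ) (S : Fin N → E) (ω : Ω) : ℝ :=
  (∑ τ ∈ (Finset.range t).filter (fun τ => Sel τ ω = S), avgRew r τ ω) /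
    (cnt Sel S t ω : ℝ)

/-- `UCB_{t,S} = R̂_t(S) + √(9 log(1/δ) / N_S^t)`. -/
noncomputable def ucbIdx (Sel : ℕ → Ω → Fin N → E) (r : ℕ → Fin N → Ω → ℝ)
    (δ : ℝ) (t : ℕ) (S : Fin N → E) (ω : Ω) : ℝ :=
  empMean Sel r t S ω + Real.sqrt (9 * Real.log (1 / δ) / (cnt Sel S t ω : ℝ))

/-- The σ-algebra generated by the history of the first `t` rounds (all selected
exposure super arms and all units' rewards). -/
def histσ [MeasurableSpace E] (Sel : ℕ → Ω → Fin N → E) (r : ℕ → Fin N → Ω → ℝ)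
    (t : ℕ) : MeasurableSpace Ω :=
  ⨆ τ ∈ Finset.range t,
    MeasurableSpace.comap (fun ω => (Sel τ ω, fun i => r τ i ω)) inferInstance

end Defs

/-- A run of the **UCB-TSN** algorithm on an MAB-N instance, modelled as a stochastic
process `(Sel_t, r_t)` on a probability space `(Ω, μ)` satisfying the defining rules
of the algorithm: Condition 1 (`2 ≤ |U_E| ≤ T`); round-robin play of `U_E` during the
exploration phase `t < T1`; UCB maximization with confidence parameter `δ` during the
second phase `T1 ≤ t < T`; and unit-averaged exposure rewards that are, conditionally
on the history and the current selection, sub-Gaussian around the exposure potential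
outcome `(1/N) ∑_i Ỹ_i(S_t)` with variance proxy at most `2`. -/
structure UCBTSN (N K nc : ℕ) (E : Type) [Fintype E] [DecidableEq E] [MeasurableSpace E]
    (Ω : Type) [MeasurableSpace Ω] where
  ν : BanditInstance N K
  Smap : Fin N → SuperArm N K → E
  Cl : Fin N → Fin nc
  T : ℕ
  T1 : ℕ
  δ : ℝ
  μ : Measure Ω
  Sel : ℕ → Ω → Fin N → E
  r : ℕ → Fin N → Ω → ℝ
  enum : ℕ → Fin N → E
  hN : 1 ≤ N
  μ_prob : IsProbabilityMeasure μ
  cond1_lo : 2 ≤ (UE Smap Cl).card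
  cond1_hi : (UE Smap Cl).card ≤ T
  hT1T : T1 ≤ T
  hδ : 0 < δ
  meas_Sel : ∀ t, Measurable (Sel t)
  meas_r : ∀ t i, Measurable (r t i)
  int_avg : ∀ t, Integrable (avgRew r t) μ
  int_exp : ∀ (t : ℕ) (m : ℝ), Integrable (fun ω => Real.exp (m * avgRew r t ω)) μ
  enum_mem : ∀ S, S ∈ UE Smap Cl ↔ ∃ j < (UE Smap Cl).card, enum j = S
  enum_inj : ∀ j j', j < (UE Smap Cl).card → j' < (UE Smap Cl).card →
    enum j = enum j' → j = j'
  sel_mem : ∀ t < T, ∀ ω, Sel t ω ∈ UE Smap Cl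
  phase1 : ∀ t < T1, ∀ ω, Sel t ω = enum (t % (UE Smap Cl).card)
  phase2 : ∀ t, T1 ≤ t → t < T → ∀ ω,
    ∀ S ∈ UE Smap Cl, ucbIdx Sel r δ t S ω ≤ ucbIdx Sel r δ t (Sel t ω) ω
  subG : ∀ t < T, ∀ m : ℝ, ∀ᵐ ω ∂μ,
    (μ[fun ω' => Real.exp (m * (avgRew r t ω' - mS ν Smap (Sel t ω'))) |
        histσ Sel r t ⊔ MeasurableSpace.comap (Sel t) inferInstance]) ω
      ≤ Real.exp (m ^ 2)

namespace UCBTSN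

variable {N K nc : ℕ} {E : Type} [Fintype E] [DecidableEq E] [MeasurableSpace E]
  {Ω : Type} [MeasurableSpace Ω]

/-- The ATE estimator output by UCB-TSN: `Δ̂_T^{(i,j)} = R̂_{T1}(S_i) − R̂_{T1}(S_j)`. -/
noncomputable def dHat (R : UCBTSN N K nc E Ω) (Si Sj : Fin N → E) (ω : Ω) : ℝ :=
  empMean R.Sel R.r R.T1 Si ω - empMean R.Sel R.r R.T1 Sj ω

/-- The estimation error `e_ν(T, Δ̂) = max_{S_i, S_j ∈ U_E} E[|Δ^{(i,j)} − Δ̂_T^{(i,j)}|]`. -/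
noncomputable def estErr (R : UCBTSN N K nc E Ω) : ℝ :=
  sSup {x : ℝ | ∃ Si ∈ UE R.Smap R.Cl, ∃ Sj ∈ UE R.Smap R.Cl,
    x = MeasureTheory.integral R.μ (fun ω => |ate R.ν R.Smap Si Sj - R.dHat Si Sj ω|)}

/-- The exposure-based regret
`R_ν(T,π) = (T/N) ∑_i Ỹ_i(S*) − (1/N) E_π[∑_{t∈[T]} ∑_i r̃_{i,t}(S_t)]`,
with `S* = argmax_{S ∈ U_E} ∑_i Ỹ_i(S)`. -/
noncomputable def regret (R : UCBTSN N K nc E Ω) : ℝ :=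
  (R.T : ℝ) * sSup {x : ℝ | ∃ S ∈ UE R.Smap R.Cl, x = mS R.ν R.Smap S}
    - MeasureTheory.integral R.μ (fun ω => ∑ t ∈ Finset.range R.T, avgRew R.r t ω)

end UCBTSN


section Aux

/-- Pull-out + truncation + monotone convergence: if `G ≥ 0` is `m'`-measurable and
integrable, `f ≥ 0` is integrable, and `μ[f|m'] ≤ b` a.e., then `G⬝f` is integrable
with `∫ G⬝f ≤ b ∫ G`. -/
lemma pullout_bound {Ω : Type} [mΩ : MeasurableSpace Ω] {μ : Measure Ω}
    [IsProbabilityMeasure μ] {G f : Ω → ℝ} (hGm : Measurable G) (hfm : Measurable f)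
    (hGint : Integrable G μ) (hfint : Integrable f μ)
    (hGnn : ∀ ω, 0 ≤ G ω) (hfnn : ∀ ω, 0 ≤ f ω)
    (m' : MeasurableSpace Ω) (hm' : m' ≤ mΩ) (hGsm : StronglyMeasurable[m'] G)
    {b : ℝ} (hbnn : 0 ≤ b) (hsub : μ[f|m'] ≤ᵐ[μ] fun _ => b) :
    Integrable (fun ω => G ω * f ω) μ ∧
      ∫ ω, G ω * f ω ∂μ ≤ b * ∫ ω, G ω ∂μ := by
  have key : ∀ k : ℕ, Integrable (fun ω => G ω * min (f ω) k) μ ∧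
      ∫ ω, G ω * min (f ω) k ∂μ ≤ b * ∫ ω, G ω ∂μ := by
    intro k
    have hfknn : ∀ ω, 0 ≤ min (f ω) (k : ℝ) := fun ω => le_min (hfnn ω) (Nat.cast_nonneg k)
    have hfkmeas : Measurable[mΩ] (fun ω => min (f ω) (k : ℝ)) := hfm.min measurable_const
    have hfkint : Integrable (fun ω => min (f ω) (k : ℝ)) μ := by
      refine hfint.mono hfkmeas.aestronglyMeasurable (Filter.Eventually.of_forall fun ω => ?_)
      rw [Real.norm_eq_abs, Real.norm_eq_abs, abs_of_nonneg (hfknn ω), abs_of_nonneg (hfnn ω)]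
      exact min_le_left _ _
    have hGfkint : Integrable (fun ω => G ω * min (f ω) (k : ℝ)) μ := by
      refine (hGint.const_mul (k : ℝ)).mono
        ((hGm.mul hfkmeas).aestronglyMeasurable) (Filter.Eventually.of_forall fun ω => ?_)
      rw [Real.norm_eq_abs, Real.norm_eq_abs, abs_mul, abs_of_nonneg (hGnn ω),
        abs_of_nonneg (hfknn ω), abs_mul, abs_of_nonneg (Nat.cast_nonneg (α := ℝ) k),
        abs_of_nonneg (hGnn ω), mul_comm (k:ℝ) (G ω)]
      exact mul_le_mul_of_nonneg_left (min_le_right _ _) (hGnn ω)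
    have hGfkint' : Integrable (G * fun ω => min (f ω) (k : ℝ)) μ := hGfkint
    have hpull := condExp_mul_of_stronglyMeasurable_left (μ := μ) hGsm hGfkint' hfkint
    have hcondle : μ[(fun ω => min (f ω) (k : ℝ))|m'] ≤ᵐ[μ] fun _ => b :=
      (condExp_mono hfkint hfint
        (Filter.Eventually.of_forall fun ω => min_le_left _ _)).trans hsub
    refine ⟨hGfkint, ?_⟩
    have h1 : ∫ ω, G ω * min (f ω) (k:ℝ) ∂μ
        = ∫ ω, (μ[G * (fun ω => min (f ω) (k:ℝ))|m']) ω ∂μ :=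
      (integral_condExp hm').symm
    have h2 : ∫ ω, (μ[G * (fun ω => min (f ω) (k:ℝ))|m']) ω ∂μ
        = ∫ ω, G ω * (μ[(fun ω => min (f ω) (k:ℝ))|m']) ω ∂μ :=
      integral_congr_ae hpull
    have h3 : ∫ ω, G ω * (μ[(fun ω => min (f ω) (k:ℝ))|m']) ω ∂μ
        ≤ ∫ ω, G ω * b ∂μ := by
      refine integral_mono_ae (integrable_condExp.congr hpull) (hGint.mul_const _) ?_
      filter_upwards [hcondle] with ω hω
      exact mul_le_mul_of_nonneg_left hω (hGnn ω)
    have h4 : ∫ ω, G ω * b ∂μ = b * ∫ ω, G ω ∂μ := by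
      rw [integral_mul_const, mul_comm]
    rw [h1, h2, ← h4]
    exact h3
  set B := b * ∫ ω, G ω ∂μ with hB
  have hBnn : 0 ≤ B := mul_nonneg hbnn (integral_nonneg hGnn)
  have hGfmeas : Measurable[mΩ] (fun ω => G ω * f ω) := hGm.mul hfm
  have hGfnn : ∀ ω, 0 ≤ G ω * f ω := fun ω => mul_nonneg (hGnn ω) (hfnn ω)
  have hsup : ∀ ω, (⨆ k : ℕ, ENNReal.ofReal (G ω * min (f ω) k)) = ENNReal.ofReal (G ω * f ω) := by
    intro ω
    apply le_antisymm
    · exact iSup_le fun k => ENNReal.ofReal_le_ofReal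
        (mul_le_mul_of_nonneg_left (min_le_left _ _) (hGnn ω))
    · refine le_iSup_of_le ⌈f ω⌉₊ ?_
      rw [min_eq_left (Nat.le_ceil _)]
  have hlin : ∫⁻ ω, ENNReal.ofReal (G ω * f ω) ∂μ ≤ ENNReal.ofReal B := by
    calc ∫⁻ ω, ENNReal.ofReal (G ω * f ω) ∂μ
        = ∫⁻ ω, ⨆ k : ℕ, ENNReal.ofReal (G ω * min (f ω) k) ∂μ :=
          lintegral_congr fun ω => (hsup ω).symm
      _ = ⨆ k : ℕ, ∫⁻ ω, ENNReal.ofReal (G ω * min (f ω) k) ∂μ := by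
          refine lintegral_iSup (fun k => ENNReal.measurable_ofReal.comp
            (hGm.mul (hfm.min measurable_const))) ?_
          intro i j hij ω
          exact ENNReal.ofReal_le_ofReal (mul_le_mul_of_nonneg_left
            (min_le_min le_rfl (Nat.cast_le.2 hij)) (hGnn ω))
      _ ≤ ENNReal.ofReal B := by
          refine iSup_le fun k => ?_
          rw [← ofReal_integral_eq_lintegral_ofReal (key k).1
            (Filter.Eventually.of_forall fun ω =>
              mul_nonneg (hGnn ω) (le_min (hfnn ω) (Nat.cast_nonneg _)))]
          exact ENNReal.ofReal_le_ofReal (key k).2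
  have hint : Integrable (fun ω => G ω * f ω) μ := by
    refine ⟨hGfmeas.aestronglyMeasurable, ?_⟩
    rw [hasFiniteIntegral_iff_norm]
    have heq : ∀ ω, ENNReal.ofReal ‖G ω * f ω‖ = ENNReal.ofReal (G ω * f ω) := fun ω => by
      rw [Real.norm_eq_abs, abs_of_nonneg (hGfnn ω)]
    rw [lintegral_congr heq]
    exact lt_of_le_of_lt hlin ENNReal.ofReal_lt_top
  refine ⟨hint, ?_⟩
  rw [integral_eq_lintegral_of_nonneg_ae (Filter.Eventually.of_forall hGfnn)
    hGfmeas.aestronglyMeasurable]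
  calc (∫⁻ ω, ENNReal.ofReal (G ω * f ω) ∂μ).toReal
      ≤ (ENNReal.ofReal B).toReal := ENNReal.toReal_mono ENNReal.ofReal_ne_top hlin
    _ = B := ENNReal.toReal_ofReal hBnn

variable {N K nc : ℕ} {E : Type} [Fintype E] [DecidableEq E] [MeasurableSpace E]
  {Ω : Type} [MeasurableSpace Ω]

lemma UCBTSN.measurable_avgRew' (R : UCBTSN N K nc E Ω) (t : ℕ) :
    Measurable (avgRew R.r t) :=
  measurable_const.mul (Finset.measurable_sum _ fun i _ => R.meas_r t i)

lemma UCBTSN.histσ_le' (R : UCBTSN N K nc E Ω) (t : ℕ) :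
    histσ R.Sel R.r t ⊔ MeasurableSpace.comap (R.Sel t) inferInstance
      ≤ (inferInstance : MeasurableSpace Ω) := by
  apply sup_le
  · apply iSup₂_le
    intro τ _
    exact ((R.meas_Sel τ).prodMk (measurable_pi_lambda _ fun i => R.meas_r τ i)).comap_le
  · exact (R.meas_Sel t).comap_le

lemma UCBTSN.avgRew_meas_comap (R : UCBTSN N K nc E Ω) (τ : ℕ) :
    Measurable[MeasurableSpace.comap (fun ω => (R.Sel τ ω, fun i => R.r τ i ω)) inferInstance]
      (avgRew R.r τ) := by
  have h : avgRew R.r τ = (fun p : (Fin N → E) × (Fin N → ℝ) => (1/(N:ℝ)) * ∑ i, p.2 i) ∘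
      (fun ω => (R.Sel τ ω, fun i => R.r τ i ω)) := rfl
  rw [h]
  exact (measurable_const.mul (Finset.measurable_sum _ fun i _ =>
    (measurable_pi_apply i).comp measurable_snd)).comp (Measurable.of_comap_le le_rfl)

/-- The MGF bound over the exploration phase, by induction over the rounds. -/
lemma UCBTSN.mgf (R : UCBTSN N K nc E Ω) (c : ℕ → ℝ) :
    ∀ n, n ≤ R.T1 →
      Integrable (fun ω => Real.exp (∑ t ∈ Finset.range n,
          c t * (avgRew R.r t ω - mS R.ν R.Smap (R.enum (t % (UE R.Smap R.Cl).card))))) R.μ ∧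
      ∫ ω, Real.exp (∑ t ∈ Finset.range n,
          c t * (avgRew R.r t ω - mS R.ν R.Smap (R.enum (t % (UE R.Smap R.Cl).card)))) ∂(R.μ)
        ≤ Real.exp (∑ t ∈ Finset.range n, (c t)^2) := by
  haveI := R.μ_prob
  intro n
  induction n with
  | zero => intro _; simp
  | succ n ih =>
    intro hn1
    have hnT1 : n < R.T1 := Nat.lt_of_succ_le hn1
    obtain ⟨hGint, hGle⟩ := ih (Nat.le_of_succ_le hn1)
    have hGm : Measurable (fun ω => Real.exp (∑ t ∈ Finset.range n,
        c t * (avgRew R.r t ω - mS R.ν R.Smap (R.enum (t % (UE R.Smap R.Cl).card))))) :=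
      Real.measurable_exp.comp (Finset.measurable_sum _ fun t _ =>
        (((R.measurable_avgRew' t).sub measurable_const).const_mul (c t)))
    have hGsm : StronglyMeasurable[histσ R.Sel R.r n ⊔
        MeasurableSpace.comap (R.Sel n) inferInstance]
        (fun ω => Real.exp (∑ t ∈ Finset.range n,
          c t * (avgRew R.r t ω - mS R.ν R.Smap (R.enum (t % (UE R.Smap R.Cl).card))))) := by
      refine Measurable.stronglyMeasurable ?_
      refine Real.measurable_exp.comp (Finset.measurable_sum _ fun t ht => ?_)
      refine Measurable.const_mul (Measurable.sub ?_ measurable_const) (c t)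
      refine (R.avgRew_meas_comap t).mono (le_trans ?_ le_sup_left) le_rfl
      exact le_iSup₂ (f := fun τ (_ : τ ∈ Finset.range n) => MeasurableSpace.comap
        (fun ω => (R.Sel τ ω, fun i => R.r τ i ω)) inferInstance) t ht
    have hfm : Measurable (fun ω => Real.exp (c n * (avgRew R.r n ω
        - mS R.ν R.Smap (R.enum (n % (UE R.Smap R.Cl).card))))) :=
      Real.measurable_exp.comp (((R.measurable_avgRew' n).sub measurable_const).const_mul (c n))
    have hfint : Integrable (fun ω => Real.exp (c n * (avgRew R.r n ω
        - mS R.ν R.Smap (R.enum (n % (UE R.Smap R.Cl).card))))) R.μ := by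
      have h0 := (R.int_exp n (c n)).mul_const
        (Real.exp (-(c n * mS R.ν R.Smap (R.enum (n % (UE R.Smap R.Cl).card)))))
      refine h0.congr (Filter.Eventually.of_forall fun ω => ?_)
      simp only [← Real.exp_add]
      congr 1
      ring
    have hsubG : R.μ[(fun ω => Real.exp (c n * (avgRew R.r n ω
        - mS R.ν R.Smap (R.enum (n % (UE R.Smap R.Cl).card))))) |
          histσ R.Sel R.r n ⊔ MeasurableSpace.comap (R.Sel n) inferInstance]
        ≤ᵐ[R.μ] fun _ => Real.exp ((c n) ^ 2) := by
      have h := R.subG n (lt_of_lt_of_le hnT1 R.hT1T) (c n)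
      have heq : (fun ω' => Real.exp (c n * (avgRew R.r n ω' - mS R.ν R.Smap (R.Sel n ω'))))
          = fun ω => Real.exp (c n * (avgRew R.r n ω
            - mS R.ν R.Smap (R.enum (n % (UE R.Smap R.Cl).card)))) := by
        funext ω'; rw [R.phase1 n hnT1 ω']
      rw [heq] at h
      exact h
    obtain ⟨h1, h2⟩ := pullout_bound hGm hfm hGint hfint
      (fun ω => (Real.exp_pos _).le) (fun ω => (Real.exp_pos _).le)
      _ (R.histσ_le' n) hGsm (Real.exp_pos _).le hsubG
    have hsplit : ∀ ω, Real.exp (∑ t ∈ Finset.range (n+1),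
        c t * (avgRew R.r t ω - mS R.ν R.Smap (R.enum (t % (UE R.Smap R.Cl).card))))
        = Real.exp (∑ t ∈ Finset.range n,
            c t * (avgRew R.r t ω - mS R.ν R.Smap (R.enum (t % (UE R.Smap R.Cl).card))))
          * Real.exp (c n * (avgRew R.r n ω
            - mS R.ν R.Smap (R.enum (n % (UE R.Smap R.Cl).card)))) := by
      intro ω
      rw [Finset.sum_range_succ, Real.exp_add]
    constructor
    · exact h1.congr (Filter.Eventually.of_forall fun ω => (hsplit ω).symm)
    · calc ∫ ω, Real.exp (∑ t ∈ Finset.range (n+1),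
            c t * (avgRew R.r t ω - mS R.ν R.Smap (R.enum (t % (UE R.Smap R.Cl).card)))) ∂(R.μ)
          = ∫ ω, Real.exp (∑ t ∈ Finset.range n,
              c t * (avgRew R.r t ω - mS R.ν R.Smap (R.enum (t % (UE R.Smap R.Cl).card))))
            * Real.exp (c n * (avgRew R.r n ω
              - mS R.ν R.Smap (R.enum (n % (UE R.Smap R.Cl).card)))) ∂(R.μ) :=
            integral_congr_ae (Filter.Eventually.of_forall fun ω => hsplit ω)
        _ ≤ Real.exp ((c n)^2) * ∫ ω, Real.exp (∑ t ∈ Finset.range n,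
              c t * (avgRew R.r t ω
                - mS R.ν R.Smap (R.enum (t % (UE R.Smap R.Cl).card)))) ∂(R.μ) := h2
        _ ≤ Real.exp ((c n)^2) * Real.exp (∑ t ∈ Finset.range n, (c t)^2) :=
            mul_le_mul_of_nonneg_left hGle (Real.exp_pos _).le
        _ = Real.exp (∑ t ∈ Finset.range (n+1), (c t)^2) := by
            rw [Finset.sum_range_succ, Real.exp_add, mul_comm]

end Aux


set_option maxHeartbeats 4000000 in
/-- **Theorem 3 (ATE estimation upper bound of UCB-TSN).**  Under Condition 1, if the
exploration length satisfies `T1 ≥ |U_E|`, then for all `S_i ≠ S_j ∈ U_E` the ATE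
estimator of UCB-TSN satisfies
`E[|Δ̂_T^{(i,j)} − Δ^{(i,j)}|] ≤ 2 √(4 log(T1 |U_E|) / ⌊T1/|U_E|⌋) + 1/T1`;
in particular `E[|Δ̂_T^{(i,j)} − Δ^{(i,j)}|] = Õ(√(|U_E|/T1))`. -/
theorem ucb_tsn_ate_upper_bound
    {N K nc : ℕ} {E : Type} [Fintype E] [DecidableEq E] [MeasurableSpace E]
    {Ω : Type} [MeasurableSpace Ω]
    (R : UCBTSN N K nc E Ω)
    (hT1 : (UE R.Smap R.Cl).card ≤ R.T1) :
    ∀ Si ∈ UE R.Smap R.Cl, ∀ Sj ∈ UE R.Smap R.Cl, Si ≠ Sj →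
      MeasureTheory.integral R.μ (fun ω => |R.dHat Si Sj ω - ate R.ν R.Smap Si Sj|) ≤
        2 * Real.sqrt (4 * Real.log ((R.T1 : ℝ) * ((UE R.Smap R.Cl).card : ℝ))
              / ((R.T1 / (UE R.Smap R.Cl).card : ℕ) : ℝ))
          + 1 / (R.T1 : ℝ) := by
  classical
  haveI := R.μ_prob
  intro Si hSi Sj hSj hne
  obtain ⟨ji, hji, hjie⟩ := (R.enum_mem Si).1 hSi
  obtain ⟨jj, hjj, hjje⟩ := (R.enum_mem Sj).1 hSj
  subst hjie
  subst hjje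
  have hjine : ji ≠ jj := fun h => hne (by rw [h])
  have hM2 : 2 ≤ (UE R.Smap R.Cl).card := R.cond1_lo
  have hM0 : 0 < (UE R.Smap R.Cl).card := by omega
  have hT1pos : 0 < R.T1 := lt_of_lt_of_le hM0 hT1
  have hn01 : 1 ≤ (R.T1 / (UE R.Smap R.Cl).card) := (Nat.one_le_div_iff hM0).2 hT1
  -- Phase-1 selections are deterministic round-robin.
  have hfil : ∀ (ω : Ω) (j : ℕ), j < (UE R.Smap R.Cl).card →
      (Finset.range R.T1).filter (fun τ => R.Sel τ ω = R.enum j)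
        = (Finset.range R.T1).filter (fun t => t % (UE R.Smap R.Cl).card = j) := by
    intro ω j hj
    refine Finset.filter_congr fun t ht => ?_
    rw [Finset.mem_range] at ht
    rw [R.phase1 t ht ω]
    constructor
    · intro h
      exact R.enum_inj _ _ (Nat.mod_lt _ hM0) hj h
    · intro h
      rw [h]
  have hemp : ∀ (ω : Ω) (j : ℕ), j < (UE R.Smap R.Cl).card → empMean R.Sel R.r R.T1 (R.enum j) ω =
      (∑ t ∈ (Finset.range R.T1).filter (fun t => t % (UE R.Smap R.Cl).card = j), avgRew R.r t ω) /
        ((((Finset.range R.T1).filter (fun t => t % (UE R.Smap R.Cl).card = j)).card : ℝ)) := by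
    intro ω j hj
    simp only [empMean, cnt]
    rw [hfil ω j hj]
  have hcard : ∀ j, j < (UE R.Smap R.Cl).card → (R.T1 / (UE R.Smap R.Cl).card) ≤ ((Finset.range R.T1).filter (fun t => t % (UE R.Smap R.Cl).card = j)).card := by
    intro j hj
    have h := Finset.card_le_card_of_injOn (f := fun k => (UE R.Smap R.Cl).card * k + j)
      (s := Finset.range (R.T1 / (UE R.Smap R.Cl).card))
      (t := (Finset.range R.T1).filter (fun t => t % (UE R.Smap R.Cl).card = j))
      (by
        intro k hk
        rw [Finset.mem_coe, Finset.mem_range] at hk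
        rw [Finset.mem_coe, Finset.mem_filter, Finset.mem_range]
        refine ⟨?_, ?_⟩
        · calc (UE R.Smap R.Cl).card * k + j < (UE R.Smap R.Cl).card * k + (UE R.Smap R.Cl).card := by omega
            _ = (UE R.Smap R.Cl).card * (k + 1) := by ring
            _ ≤ (UE R.Smap R.Cl).card * (R.T1 / (UE R.Smap R.Cl).card) := Nat.mul_le_mul_left _ hk
            _ = (R.T1 / (UE R.Smap R.Cl).card) * (UE R.Smap R.Cl).card := Nat.mul_comm _ _
            _ ≤ R.T1 := Nat.div_mul_le_self R.T1 (UE R.Smap R.Cl).card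
        · rw [Nat.mul_add_mod, Nat.mod_eq_of_lt hj])
      (by
        intro a _ b _ hab
        simp only at hab
        have : (UE R.Smap R.Cl).card * a = (UE R.Smap R.Cl).card * b := by omega
        exact Nat.eq_of_mul_eq_mul_left hM0 this)
    simpa using h
  have hcine : ((((Finset.range R.T1).filter (fun t => t % (UE R.Smap R.Cl).card = ji)).card : ℝ)) ≠ 0 :=
    Nat.cast_ne_zero.2 (lt_of_lt_of_le hn01 (hcard ji hji)).ne'
  have hcjne : ((((Finset.range R.T1).filter (fun t => t % (UE R.Smap R.Cl).card = jj)).card : ℝ)) ≠ 0 :=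
    Nat.cast_ne_zero.2 (lt_of_lt_of_le hn01 (hcard jj hjj)).ne'
  have hate : ate R.ν R.Smap (R.enum ji) (R.enum jj)
      = mS R.ν R.Smap (R.enum ji) - mS R.ν R.Smap (R.enum jj) := by
    simp only [ate, mS]
    rw [Finset.sum_sub_distrib]
    ring
  -- the centered empirical mean of each of the two arms, as an indicator sum
  have hone : ∀ (ω : Ω) (j : ℕ), j < (UE R.Smap R.Cl).card →
      ∑ t ∈ Finset.range R.T1, (if t % (UE R.Smap R.Cl).card = j
          then ((((Finset.range R.T1).filter (fun t => t % (UE R.Smap R.Cl).card = j)).card : ℝ))⁻¹ * (avgRew R.r t ω - mS R.ν R.Smap (R.enum (t % (UE R.Smap R.Cl).card))) else 0)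
        = empMean R.Sel R.r R.T1 (R.enum j) ω - mS R.ν R.Smap (R.enum j) := by
    intro ω j hj
    have hcr : ((((Finset.range R.T1).filter (fun t => t % (UE R.Smap R.Cl).card = j)).card : ℝ)) ≠ 0 :=
      Nat.cast_ne_zero.2 (lt_of_lt_of_le hn01 (hcard j hj)).ne'
    rw [hemp ω j hj, ← Finset.sum_filter]
    have hco : ∀ t ∈ (Finset.range R.T1).filter (fun t => t % (UE R.Smap R.Cl).card = j),
        ((((Finset.range R.T1).filter (fun t => t % (UE R.Smap R.Cl).card = j)).card : ℝ))⁻¹ * (avgRew R.r t ω - mS R.ν R.Smap (R.enum (t % (UE R.Smap R.Cl).card)))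
          = ((((Finset.range R.T1).filter (fun t => t % (UE R.Smap R.Cl).card = j)).card : ℝ))⁻¹ * avgRew R.r t ω
            - ((((Finset.range R.T1).filter (fun t => t % (UE R.Smap R.Cl).card = j)).card : ℝ))⁻¹ * mS R.ν R.Smap (R.enum j) := by
      intro t ht
      rw [(Finset.mem_filter.1 ht).2]
      ring
    rw [Finset.sum_congr rfl hco, Finset.sum_sub_distrib, ← Finset.mul_sum,
      Finset.sum_const, nsmul_eq_mul]
    field_simp
  -- identification of the estimator error with a linear statistic
  have hD : ∀ ω : Ω, R.dHat (R.enum ji) (R.enum jj) ω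
      - ate R.ν R.Smap (R.enum ji) (R.enum jj) = (∑ t ∈ Finset.range R.T1, ((if t % (UE R.Smap R.Cl).card = ji then ((((Finset.range R.T1).filter (fun t => t % (UE R.Smap R.Cl).card = ji)).card : ℝ))⁻¹ else 0) - (if t % (UE R.Smap R.Cl).card = jj then ((((Finset.range R.T1).filter (fun t => t % (UE R.Smap R.Cl).card = jj)).card : ℝ))⁻¹ else 0)) * (avgRew R.r t ω - mS R.ν R.Smap (R.enum (t % (UE R.Smap R.Cl).card)))) := by
    intro ω
    have hsplit : ∀ t ∈ Finset.range R.T1, ((if t % (UE R.Smap R.Cl).card = ji then ((((Finset.range R.T1).filter (fun t => t % (UE R.Smap R.Cl).card = ji)).card : ℝ))⁻¹ else 0) - (if t % (UE R.Smap R.Cl).card = jj then ((((Finset.range R.T1).filter (fun t => t % (UE R.Smap R.Cl).card = jj)).card : ℝ))⁻¹ else 0)) * (avgRew R.r t ω - mS R.ν R.Smap (R.enum (t % (UE R.Smap R.Cl).card)))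
        = (if t % (UE R.Smap R.Cl).card = ji then ((((Finset.range R.T1).filter (fun t => t % (UE R.Smap R.Cl).card = ji)).card : ℝ))⁻¹ * (avgRew R.r t ω - mS R.ν R.Smap (R.enum (t % (UE R.Smap R.Cl).card))) else 0)
          - (if t % (UE R.Smap R.Cl).card = jj then ((((Finset.range R.T1).filter (fun t => t % (UE R.Smap R.Cl).card = jj)).card : ℝ))⁻¹ * (avgRew R.r t ω - mS R.ν R.Smap (R.enum (t % (UE R.Smap R.Cl).card))) else 0) := by
      intro t _
      split_ifs <;> ring
    rw [Finset.sum_congr rfl hsplit, Finset.sum_sub_distrib, hone ω ji hji,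
      hone ω jj hjj]
    simp only [UCBTSN.dHat]
    rw [hate]
    ring
  -- sum of squared coefficients
  have hsq : ∑ t ∈ Finset.range R.T1, ((if t % (UE R.Smap R.Cl).card = ji then ((((Finset.range R.T1).filter (fun t => t % (UE R.Smap R.Cl).card = ji)).card : ℝ))⁻¹ else 0) - (if t % (UE R.Smap R.Cl).card = jj then ((((Finset.range R.T1).filter (fun t => t % (UE R.Smap R.Cl).card = jj)).card : ℝ))⁻¹ else 0)) ^ 2 ≤ 2 / (((R.T1 / (UE R.Smap R.Cl).card) : ℕ) : ℝ) := by
    have hpt : ∀ t ∈ Finset.range R.T1, ((if t % (UE R.Smap R.Cl).card = ji then ((((Finset.range R.T1).filter (fun t => t % (UE R.Smap R.Cl).card = ji)).card : ℝ))⁻¹ else 0) - (if t % (UE R.Smap R.Cl).card = jj then ((((Finset.range R.T1).filter (fun t => t % (UE R.Smap R.Cl).card = jj)).card : ℝ))⁻¹ else 0)) ^ 2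
        = (if t % (UE R.Smap R.Cl).card = ji then (((((Finset.range R.T1).filter (fun t => t % (UE R.Smap R.Cl).card = ji)).card : ℝ))⁻¹) ^ 2 else 0)
          + (if t % (UE R.Smap R.Cl).card = jj then (((((Finset.range R.T1).filter (fun t => t % (UE R.Smap R.Cl).card = jj)).card : ℝ))⁻¹) ^ 2 else 0) := by
      intro t _
      split_ifs with h1 h2
      · exact absurd (h1.symm.trans h2) hjine
      all_goals ring
    rw [Finset.sum_congr rfl hpt, Finset.sum_add_distrib, ← Finset.sum_filter,
      ← Finset.sum_filter, Finset.sum_const, Finset.sum_const, nsmul_eq_mul, nsmul_eq_mul]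
    have hbound : ∀ cc : ℕ, (R.T1 / (UE R.Smap R.Cl).card) ≤ cc → (cc : ℝ) * (((cc : ℝ))⁻¹) ^ 2 ≤ ((((R.T1 / (UE R.Smap R.Cl).card) : ℕ) : ℝ))⁻¹ := by
      intro cc hcc
      have hcc0 : (0 : ℝ) < (cc : ℝ) := by
        exact_mod_cast lt_of_lt_of_le hn01 hcc
      have heq : (cc : ℝ) * (((cc : ℝ))⁻¹) ^ 2 = ((cc : ℝ))⁻¹ := by
        rw [sq, ← mul_assoc, mul_inv_cancel₀ hcc0.ne', one_mul]
      rw [heq]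
      exact inv_anti₀ (by exact_mod_cast hn01) (by exact_mod_cast hcc)
    calc (((Finset.range R.T1).filter (fun t => t % (UE R.Smap R.Cl).card = ji)).card : ℝ) * (((((Finset.range R.T1).filter (fun t => t % (UE R.Smap R.Cl).card = ji)).card : ℝ))⁻¹) ^ 2 + (((Finset.range R.T1).filter (fun t => t % (UE R.Smap R.Cl).card = jj)).card : ℝ) * (((((Finset.range R.T1).filter (fun t => t % (UE R.Smap R.Cl).card = jj)).card : ℝ))⁻¹) ^ 2
        ≤ ((((R.T1 / (UE R.Smap R.Cl).card) : ℕ) : ℝ))⁻¹ + ((((R.T1 / (UE R.Smap R.Cl).card) : ℕ) : ℝ))⁻¹ :=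
          add_le_add (hbound _ (hcard ji hji)) (hbound _ (hcard jj hjj))
      _ = 2 / (((R.T1 / (UE R.Smap R.Cl).card) : ℕ) : ℝ) := by ring
  -- MGF bound for the linear statistic
  have hmgf : ∀ θ : ℝ, Integrable (fun ω => Real.exp (θ * (∑ t ∈ Finset.range R.T1, ((if t % (UE R.Smap R.Cl).card = ji then ((((Finset.range R.T1).filter (fun t => t % (UE R.Smap R.Cl).card = ji)).card : ℝ))⁻¹ else 0) - (if t % (UE R.Smap R.Cl).card = jj then ((((Finset.range R.T1).filter (fun t => t % (UE R.Smap R.Cl).card = jj)).card : ℝ))⁻¹ else 0)) * (avgRew R.r t ω - mS R.ν R.Smap (R.enum (t % (UE R.Smap R.Cl).card)))))) R.μ ∧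
      ∫ ω, Real.exp (θ * (∑ t ∈ Finset.range R.T1, ((if t % (UE R.Smap R.Cl).card = ji then ((((Finset.range R.T1).filter (fun t => t % (UE R.Smap R.Cl).card = ji)).card : ℝ))⁻¹ else 0) - (if t % (UE R.Smap R.Cl).card = jj then ((((Finset.range R.T1).filter (fun t => t % (UE R.Smap R.Cl).card = jj)).card : ℝ))⁻¹ else 0)) * (avgRew R.r t ω - mS R.ν R.Smap (R.enum (t % (UE R.Smap R.Cl).card))))) ∂(R.μ) ≤ Real.exp (θ ^ 2 * (2 / (((R.T1 / (UE R.Smap R.Cl).card) : ℕ) : ℝ))) := by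
    intro θ
    obtain ⟨h1, h2⟩ := R.mgf (fun t => θ * ((if t % (UE R.Smap R.Cl).card = ji then ((((Finset.range R.T1).filter (fun t => t % (UE R.Smap R.Cl).card = ji)).card : ℝ))⁻¹ else 0) - (if t % (UE R.Smap R.Cl).card = jj then ((((Finset.range R.T1).filter (fun t => t % (UE R.Smap R.Cl).card = jj)).card : ℝ))⁻¹ else 0))) R.T1 le_rfl
    have he : (fun ω => Real.exp (∑ t ∈ Finset.range R.T1,
        (fun t => θ * ((if t % (UE R.Smap R.Cl).card = ji then ((((Finset.range R.T1).filter (fun t => t % (UE R.Smap R.Cl).card = ji)).card : ℝ))⁻¹ else 0) - (if t % (UE R.Smap R.Cl).card = jj then ((((Finset.range R.T1).filter (fun t => t % (UE R.Smap R.Cl).card = jj)).card : ℝ))⁻¹ else 0))) t * (avgRew R.r t ω - mS R.ν R.Smap (R.enum (t % (UE R.Smap R.Cl).card)))))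
        = fun ω => Real.exp (θ * (∑ t ∈ Finset.range R.T1, ((if t % (UE R.Smap R.Cl).card = ji then ((((Finset.range R.T1).filter (fun t => t % (UE R.Smap R.Cl).card = ji)).card : ℝ))⁻¹ else 0) - (if t % (UE R.Smap R.Cl).card = jj then ((((Finset.range R.T1).filter (fun t => t % (UE R.Smap R.Cl).card = jj)).card : ℝ))⁻¹ else 0)) * (avgRew R.r t ω - mS R.ν R.Smap (R.enum (t % (UE R.Smap R.Cl).card))))) := by
      funext ω
      congr 1
      rw [Finset.mul_sum]
      exact Finset.sum_congr rfl fun t _ => by ring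
    rw [he] at h1 h2
    refine ⟨h1, le_trans h2 ?_⟩
    rw [Real.exp_le_exp]
    have hss : ∑ t ∈ Finset.range R.T1, ((fun t => θ * ((if t % (UE R.Smap R.Cl).card = ji then ((((Finset.range R.T1).filter (fun t => t % (UE R.Smap R.Cl).card = ji)).card : ℝ))⁻¹ else 0) - (if t % (UE R.Smap R.Cl).card = jj then ((((Finset.range R.T1).filter (fun t => t % (UE R.Smap R.Cl).card = jj)).card : ℝ))⁻¹ else 0))) t) ^ 2
        = θ ^ 2 * ∑ t ∈ Finset.range R.T1, ((if t % (UE R.Smap R.Cl).card = ji then ((((Finset.range R.T1).filter (fun t => t % (UE R.Smap R.Cl).card = ji)).card : ℝ))⁻¹ else 0) - (if t % (UE R.Smap R.Cl).card = jj then ((((Finset.range R.T1).filter (fun t => t % (UE R.Smap R.Cl).card = jj)).card : ℝ))⁻¹ else 0)) ^ 2 := by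
      rw [Finset.mul_sum]
      exact Finset.sum_congr rfl fun t _ => by ring
    rw [hss]
    exact mul_le_mul_of_nonneg_left hsq (sq_nonneg θ)
  have hDint : Integrable (fun ω => (∑ t ∈ Finset.range R.T1, ((if t % (UE R.Smap R.Cl).card = ji then ((((Finset.range R.T1).filter (fun t => t % (UE R.Smap R.Cl).card = ji)).card : ℝ))⁻¹ else 0) - (if t % (UE R.Smap R.Cl).card = jj then ((((Finset.range R.T1).filter (fun t => t % (UE R.Smap R.Cl).card = jj)).card : ℝ))⁻¹ else 0)) * (avgRew R.r t ω - mS R.ν R.Smap (R.enum (t % (UE R.Smap R.Cl).card))))) R.μ :=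
    integrable_finset_sum _ fun t _ =>
      ((R.int_avg t).sub (integrable_const _)).const_mul _
  -- abbreviations for the numeric part
  set L := Real.log ((R.T1 : ℝ) * ((UE R.Smap R.Cl).card : ℝ)) with hL
  set n0r := (((R.T1 / (UE R.Smap R.Cl).card) : ℕ) : ℝ) with hn0r
  have hT1r : (2 : ℝ) ≤ (R.T1 : ℝ) := by exact_mod_cast le_trans hM2 hT1
  have hMr : (2 : ℝ) ≤ ((UE R.Smap R.Cl).card : ℝ) := by exact_mod_cast hM2
  have hn0r1 : (1 : ℝ) ≤ n0r := by rw [hn0r]; exact_mod_cast hn01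
  have hn0ne : n0r ≠ 0 := by linarith
  have hT1rpos : (0 : ℝ) < (R.T1 : ℝ) := by linarith
  have hTM4 : (4 : ℝ) ≤ (R.T1 : ℝ) * ((UE R.Smap R.Cl).card : ℝ) := by nlinarith
  have hTMpos : (0 : ℝ) < (R.T1 : ℝ) * ((UE R.Smap R.Cl).card : ℝ) := by linarith
  have hL1 : (1 : ℝ) ≤ L := by
    rw [hL, Real.le_log_iff_exp_le hTMpos]
    have h9 := Real.exp_one_lt_d9
    linarith
  have hexpL : Real.exp L = (R.T1 : ℝ) * ((UE R.Smap R.Cl).card : ℝ) := by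
    rw [hL]
    exact Real.exp_log hTMpos
  set eps := Real.sqrt (4 * L / n0r) with heps
  set lam := Real.sqrt (n0r * L) with hlam
  have hlam1 : (1 : ℝ) ≤ lam := by
    rw [hlam, show (1 : ℝ) = Real.sqrt 1 from Real.sqrt_one.symm]
    exact Real.sqrt_le_sqrt (by nlinarith)
  have hlampos : (0 : ℝ) < lam := lt_of_lt_of_le one_pos hlam1
  have hlamsq : lam ^ 2 = n0r * L := Real.sq_sqrt (by nlinarith)
  have hlameps : lam * eps = 2 * L := by
    rw [hlam, heps, ← Real.sqrt_mul (by nlinarith : (0:ℝ) ≤ n0r * L)]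
    rw [show n0r * L * (4 * L / n0r) = (2 * L) ^ 2 by field_simp; ring]
    exact Real.sqrt_sq (by linarith)
  have hepspos : (0 : ℝ) < eps := by
    rw [heps]
    exact Real.sqrt_pos.2 (by positivity)
  have hC0 : (0 : ℝ) ≤ Real.exp (-(2 * (lam * eps))) / (Real.exp 1 * lam) :=
    div_nonneg (Real.exp_pos _).le (mul_nonneg (Real.exp_pos _).le (by linarith))
  -- pointwise domination of |D|
  have hpt : ∀ ω : Ω, |(∑ t ∈ Finset.range R.T1, ((if t % (UE R.Smap R.Cl).card = ji then ((((Finset.range R.T1).filter (fun t => t % (UE R.Smap R.Cl).card = ji)).card : ℝ))⁻¹ else 0) - (if t % (UE R.Smap R.Cl).card = jj then ((((Finset.range R.T1).filter (fun t => t % (UE R.Smap R.Cl).card = jj)).card : ℝ))⁻¹ else 0)) * (avgRew R.r t ω - mS R.ν R.Smap (R.enum (t % (UE R.Smap R.Cl).card))))| ≤ 2 * eps + Real.exp (-(2 * (lam * eps))) / (Real.exp 1 * lam)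
      * (Real.exp (lam * (∑ t ∈ Finset.range R.T1, ((if t % (UE R.Smap R.Cl).card = ji then ((((Finset.range R.T1).filter (fun t => t % (UE R.Smap R.Cl).card = ji)).card : ℝ))⁻¹ else 0) - (if t % (UE R.Smap R.Cl).card = jj then ((((Finset.range R.T1).filter (fun t => t % (UE R.Smap R.Cl).card = jj)).card : ℝ))⁻¹ else 0)) * (avgRew R.r t ω - mS R.ν R.Smap (R.enum (t % (UE R.Smap R.Cl).card))))) + Real.exp (-lam * (∑ t ∈ Finset.range R.T1, ((if t % (UE R.Smap R.Cl).card = ji then ((((Finset.range R.T1).filter (fun t => t % (UE R.Smap R.Cl).card = ji)).card : ℝ))⁻¹ else 0) - (if t % (UE R.Smap R.Cl).card = jj then ((((Finset.range R.T1).filter (fun t => t % (UE R.Smap R.Cl).card = jj)).card : ℝ))⁻¹ else 0)) * (avgRew R.r t ω - mS R.ν R.Smap (R.enum (t % (UE R.Smap R.Cl).card)))))) := by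
    intro ω
    set d := (∑ t ∈ Finset.range R.T1, ((if t % (UE R.Smap R.Cl).card = ji then ((((Finset.range R.T1).filter (fun t => t % (UE R.Smap R.Cl).card = ji)).card : ℝ))⁻¹ else 0) - (if t % (UE R.Smap R.Cl).card = jj then ((((Finset.range R.T1).filter (fun t => t % (UE R.Smap R.Cl).card = jj)).card : ℝ))⁻¹ else 0)) * (avgRew R.r t ω - mS R.ν R.Smap (R.enum (t % (UE R.Smap R.Cl).card)))) with hd
    have h1 : lam * (|d| - 2 * eps) ≤ Real.exp (lam * (|d| - 2 * eps) - 1) := by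
      have h := Real.add_one_le_exp (lam * (|d| - 2 * eps) - 1)
      linarith
    have h2 : |d| - 2 * eps ≤ Real.exp (lam * (|d| - 2 * eps) - 1) / lam := by
      rw [le_div_iff₀ hlampos]
      calc (|d| - 2 * eps) * lam = lam * (|d| - 2 * eps) := by ring
        _ ≤ _ := h1
    have h4 : Real.exp (lam * |d|) ≤ Real.exp (lam * d) + Real.exp (-lam * d) := by
      rcases abs_cases d with ⟨hh, _⟩ | ⟨hh, _⟩
      · rw [hh]
        exact le_add_of_nonneg_right (Real.exp_pos _).le
      · rw [hh, show lam * -d = -lam * d by ring]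
        exact le_add_of_nonneg_left (Real.exp_pos _).le
    have h6 : |d| - 2 * eps ≤ Real.exp (-(2 * (lam * eps))) / (Real.exp 1 * lam)
        * (Real.exp (lam * d) + Real.exp (-lam * d)) := by
      calc |d| - 2 * eps ≤ Real.exp (lam * (|d| - 2 * eps) - 1) / lam := h2
        _ = Real.exp (-(2 * (lam * eps))) / (Real.exp 1 * lam) * Real.exp (lam * |d|) := by
            rw [show lam * (|d| - 2 * eps) - 1 = lam * |d| + -(2 * (lam * eps)) + -1 by ring,
              Real.exp_add, Real.exp_add, Real.exp_neg (1 : ℝ)]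
            field_simp
        _ ≤ _ := mul_le_mul_of_nonneg_left h4 hC0
    linarith
  obtain ⟨hIp, hIple⟩ := hmgf lam
  obtain ⟨hIm, hImle⟩ := hmgf (-lam)
  have hImle' : ∫ ω, Real.exp (-lam * (∑ t ∈ Finset.range R.T1, ((if t % (UE R.Smap R.Cl).card = ji then ((((Finset.range R.T1).filter (fun t => t % (UE R.Smap R.Cl).card = ji)).card : ℝ))⁻¹ else 0) - (if t % (UE R.Smap R.Cl).card = jj then ((((Finset.range R.T1).filter (fun t => t % (UE R.Smap R.Cl).card = jj)).card : ℝ))⁻¹ else 0)) * (avgRew R.r t ω - mS R.ν R.Smap (R.enum (t % (UE R.Smap R.Cl).card))))) ∂(R.μ) ≤ Real.exp (lam ^ 2 * (2 / n0r)) := by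
    have h := hImle
    rwa [neg_sq] at h
  have hsum_int : Integrable (fun ω => Real.exp (lam * (∑ t ∈ Finset.range R.T1, ((if t % (UE R.Smap R.Cl).card = ji then ((((Finset.range R.T1).filter (fun t => t % (UE R.Smap R.Cl).card = ji)).card : ℝ))⁻¹ else 0) - (if t % (UE R.Smap R.Cl).card = jj then ((((Finset.range R.T1).filter (fun t => t % (UE R.Smap R.Cl).card = jj)).card : ℝ))⁻¹ else 0)) * (avgRew R.r t ω - mS R.ν R.Smap (R.enum (t % (UE R.Smap R.Cl).card))))) + Real.exp (-lam * (∑ t ∈ Finset.range R.T1, ((if t % (UE R.Smap R.Cl).card = ji then ((((Finset.range R.T1).filter (fun t => t % (UE R.Smap R.Cl).card = ji)).card : ℝ))⁻¹ else 0) - (if t % (UE R.Smap R.Cl).card = jj then ((((Finset.range R.T1).filter (fun t => t % (UE R.Smap R.Cl).card = jj)).card : ℝ))⁻¹ else 0)) * (avgRew R.r t ω - mS R.ν R.Smap (R.enum (t % (UE R.Smap R.Cl).card)))))) R.μ :=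
    hIp.add hIm
  have hmul_int : Integrable (fun ω => Real.exp (-(2 * (lam * eps))) / (Real.exp 1 * lam)
      * (Real.exp (lam * (∑ t ∈ Finset.range R.T1, ((if t % (UE R.Smap R.Cl).card = ji then ((((Finset.range R.T1).filter (fun t => t % (UE R.Smap R.Cl).card = ji)).card : ℝ))⁻¹ else 0) - (if t % (UE R.Smap R.Cl).card = jj then ((((Finset.range R.T1).filter (fun t => t % (UE R.Smap R.Cl).card = jj)).card : ℝ))⁻¹ else 0)) * (avgRew R.r t ω - mS R.ν R.Smap (R.enum (t % (UE R.Smap R.Cl).card))))) + Real.exp (-lam * (∑ t ∈ Finset.range R.T1, ((if t % (UE R.Smap R.Cl).card = ji then ((((Finset.range R.T1).filter (fun t => t % (UE R.Smap R.Cl).card = ji)).card : ℝ))⁻¹ else 0) - (if t % (UE R.Smap R.Cl).card = jj then ((((Finset.range R.T1).filter (fun t => t % (UE R.Smap R.Cl).card = jj)).card : ℝ))⁻¹ else 0)) * (avgRew R.r t ω - mS R.ν R.Smap (R.enum (t % (UE R.Smap R.Cl).card))))))) R.μ :=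
    hsum_int.const_mul _
  have hRHSint : Integrable (fun ω => 2 * eps + Real.exp (-(2 * (lam * eps)))
      / (Real.exp 1 * lam) * (Real.exp (lam * (∑ t ∈ Finset.range R.T1, ((if t % (UE R.Smap R.Cl).card = ji then ((((Finset.range R.T1).filter (fun t => t % (UE R.Smap R.Cl).card = ji)).card : ℝ))⁻¹ else 0) - (if t % (UE R.Smap R.Cl).card = jj then ((((Finset.range R.T1).filter (fun t => t % (UE R.Smap R.Cl).card = jj)).card : ℝ))⁻¹ else 0)) * (avgRew R.r t ω - mS R.ν R.Smap (R.enum (t % (UE R.Smap R.Cl).card))))) + Real.exp (-lam * (∑ t ∈ Finset.range R.T1, ((if t % (UE R.Smap R.Cl).card = ji then ((((Finset.range R.T1).filter (fun t => t % (UE R.Smap R.Cl).card = ji)).card : ℝ))⁻¹ else 0) - (if t % (UE R.Smap R.Cl).card = jj then ((((Finset.range R.T1).filter (fun t => t % (UE R.Smap R.Cl).card = jj)).card : ℝ))⁻¹ else 0)) * (avgRew R.r t ω - mS R.ν R.Smap (R.enum (t % (UE R.Smap R.Cl).card))))))) R.μ :=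
    (integrable_const _).add hmul_int
  calc ∫ ω, |R.dHat (R.enum ji) (R.enum jj) ω - ate R.ν R.Smap (R.enum ji) (R.enum jj)| ∂(R.μ)
      = ∫ ω, |(∑ t ∈ Finset.range R.T1, ((if t % (UE R.Smap R.Cl).card = ji then ((((Finset.range R.T1).filter (fun t => t % (UE R.Smap R.Cl).card = ji)).card : ℝ))⁻¹ else 0) - (if t % (UE R.Smap R.Cl).card = jj then ((((Finset.range R.T1).filter (fun t => t % (UE R.Smap R.Cl).card = jj)).card : ℝ))⁻¹ else 0)) * (avgRew R.r t ω - mS R.ν R.Smap (R.enum (t % (UE R.Smap R.Cl).card))))| ∂(R.μ) :=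
        integral_congr_ae (Filter.Eventually.of_forall fun ω => congrArg abs (hD ω))
    _ ≤ ∫ ω, (2 * eps + Real.exp (-(2 * (lam * eps))) / (Real.exp 1 * lam)
          * (Real.exp (lam * (∑ t ∈ Finset.range R.T1, ((if t % (UE R.Smap R.Cl).card = ji then ((((Finset.range R.T1).filter (fun t => t % (UE R.Smap R.Cl).card = ji)).card : ℝ))⁻¹ else 0) - (if t % (UE R.Smap R.Cl).card = jj then ((((Finset.range R.T1).filter (fun t => t % (UE R.Smap R.Cl).card = jj)).card : ℝ))⁻¹ else 0)) * (avgRew R.r t ω - mS R.ν R.Smap (R.enum (t % (UE R.Smap R.Cl).card))))) + Real.exp (-lam * (∑ t ∈ Finset.range R.T1, ((if t % (UE R.Smap R.Cl).card = ji then ((((Finset.range R.T1).filter (fun t => t % (UE R.Smap R.Cl).card = ji)).card : ℝ))⁻¹ else 0) - (if t % (UE R.Smap R.Cl).card = jj then ((((Finset.range R.T1).filter (fun t => t % (UE R.Smap R.Cl).card = jj)).card : ℝ))⁻¹ else 0)) * (avgRew R.r t ω - mS R.ν R.Smap (R.enum (t % (UE R.Smap R.Cl).card))))))) ∂(R.μ)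 :=
        integral_mono hDint.abs hRHSint hpt
    _ = 2 * eps + Real.exp (-(2 * (lam * eps))) / (Real.exp 1 * lam)
          * ((∫ ω, Real.exp (lam * (∑ t ∈ Finset.range R.T1, ((if t % (UE R.Smap R.Cl).card = ji then ((((Finset.range R.T1).filter (fun t => t % (UE R.Smap R.Cl).card = ji)).card : ℝ))⁻¹ else 0) - (if t % (UE R.Smap R.Cl).card = jj then ((((Finset.range R.T1).filter (fun t => t % (UE R.Smap R.Cl).card = jj)).card : ℝ))⁻¹ else 0)) * (avgRew R.r t ω - mS R.ν R.Smap (R.enum (t % (UE R.Smap R.Cl).card))))) ∂(R.μ)) + ∫ ω, Real.exp (-lam * (∑ t ∈ Finset.range R.T1, ((if t % (UE R.Smap R.Cl).card = ji then ((((Finset.range R.T1).filter (fun t => t % (UE R.Smap R.Cl).card = ji)).card : ℝ))⁻¹ else 0) - (if t % (UE R.Smap R.Cl).card = jj then ((((Finset.range R.T1).filter (fun t => t % (UE R.Smap R.Cl).card = jj)).card : ℝ))⁻¹ else 0)) * (avgRew R.r t ω - mS R.ν R.Smap (R.enum (t % (UE R.Smap R.Cl).card))))) ∂(R.μ)) :=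 by
        have hIsum : ∫ ω, (Real.exp (lam * (∑ t ∈ Finset.range R.T1, ((if t % (UE R.Smap R.Cl).card = ji then ((((Finset.range R.T1).filter (fun t => t % (UE R.Smap R.Cl).card = ji)).card : ℝ))⁻¹ else 0) - (if t % (UE R.Smap R.Cl).card = jj then ((((Finset.range R.T1).filter (fun t => t % (UE R.Smap R.Cl).card = jj)).card : ℝ))⁻¹ else 0)) * (avgRew R.r t ω - mS R.ν R.Smap (R.enum (t % (UE R.Smap R.Cl).card))))) + Real.exp (-lam * (∑ t ∈ Finset.range R.T1, ((if t % (UE R.Smap R.Cl).card = ji then ((((Finset.range R.T1).filter (fun t => t % (UE R.Smap R.Cl).card = ji)).card : ℝ))⁻¹ else 0) - (if t % (UE R.Smap R.Cl).card = jj then ((((Finset.range R.T1).filter (fun t => t % (UE R.Smap R.Cl).card = jj)).card : ℝ))⁻¹ else 0)) * (avgRew R.r t ω - mS R.ν R.Smap (R.enum (t % (UE R.Smap R.Cl).card)))))) ∂(R.μ)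
            = (∫ ω, Real.exp (lam * (∑ t ∈ Finset.range R.T1, ((if t % (UE R.Smap R.Cl).card = ji then ((((Finset.range R.T1).filter (fun t => t % (UE R.Smap R.Cl).card = ji)).card : ℝ))⁻¹ else 0) - (if t % (UE R.Smap R.Cl).card = jj then ((((Finset.range R.T1).filter (fun t => t % (UE R.Smap R.Cl).card = jj)).card : ℝ))⁻¹ else 0)) * (avgRew R.r t ω - mS R.ν R.Smap (R.enum (t % (UE R.Smap R.Cl).card))))) ∂(R.μ)) + ∫ ω, Real.exp (-lam * (∑ t ∈ Finset.range R.T1, ((if t % (UE R.Smap R.Cl).card = ji then ((((Finset.range R.T1).filter (fun t => t % (UE R.Smap R.Cl).card = ji)).card : ℝ))⁻¹ else 0) - (if t % (UE R.Smap R.Cl).card = jj then ((((Finset.range R.T1).filter (fun t => t % (UE R.Smap R.Cl).card = jj)).card : ℝ))⁻¹ else 0)) * (avgRew R.r t ω - mS R.ν R.Smap (R.enum (t % (UE R.Smap R.Cl).card))))) ∂(R.μ) :=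
          integral_add hIp hIm
        rw [integral_add (integrable_const _) hmul_int,
          integral_const_mul (Real.exp (-(2 * (lam * eps))) / (Real.exp 1 * lam)), hIsum,
          integral_const, probReal_univ]
        simp
    _ ≤ 2 * eps + Real.exp (-(2 * (lam * eps))) / (Real.exp 1 * lam)
          * (Real.exp (lam ^ 2 * (2 / n0r)) + Real.exp (lam ^ 2 * (2 / n0r))) := by
        have hh := add_le_add hIple hImle'
        exact add_le_add_right (mul_le_mul_of_nonneg_left hh hC0) _
    _ ≤ 2 * eps + 1 / (R.T1 : ℝ) := by
        have harg : lam ^ 2 * (2 / n0r) = 2 * L := by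
          rw [hlamsq]
          field_simp
        have harg2 : -(2 * (lam * eps)) = -(4 * L) := by rw [hlameps]; ring
        rw [harg, harg2]
        have hE : (2 : ℝ) ≤ Real.exp 1 := by
          have h := Real.add_one_le_exp 1
          linarith
        have hX : (2 : ℝ) ≤ Real.exp 1 * lam := by nlinarith
        have hXpos : (0 : ℝ) < Real.exp 1 * lam := by linarith
        have hexpsum : Real.exp (-(4 * L)) * Real.exp (2 * L)
            = ((((R.T1 : ℝ) * ((UE R.Smap R.Cl).card : ℝ)) ^ 2))⁻¹ := by
          rw [← Real.exp_add, show -(4 * L) + 2 * L = -(2 * L) by ring, Real.exp_neg,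
            show (2 : ℝ) * L = L + L by ring, Real.exp_add, hexpL, sq]
        have hkey : Real.exp (-(4 * L)) / (Real.exp 1 * lam)
            * (Real.exp (2 * L) + Real.exp (2 * L)) ≤ 1 / (R.T1 : ℝ) := by
          have heq1 : Real.exp (-(4 * L)) / (Real.exp 1 * lam)
              * (Real.exp (2 * L) + Real.exp (2 * L))
              = 2 * (Real.exp (-(4 * L)) * Real.exp (2 * L)) / (Real.exp 1 * lam) := by
            ring
          rw [heq1, hexpsum, div_le_div_iff₀ hXpos hT1rpos]
          have hp8 : 8 * (R.T1 : ℝ) ≤ ((R.T1 : ℝ) * ((UE R.Smap R.Cl).card : ℝ)) ^ 2 := by nlinarith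
          have hppos : (0 : ℝ) < ((R.T1 : ℝ) * ((UE R.Smap R.Cl).card : ℝ)) ^ 2 := by positivity
          have hinv : ((((R.T1 : ℝ) * ((UE R.Smap R.Cl).card : ℝ)) ^ 2))⁻¹ ≤ (8 * (R.T1 : ℝ))⁻¹ :=
            inv_anti₀ (by linarith) hp8
          have h8pos : (0 : ℝ) < 8 * (R.T1 : ℝ) := by linarith
          have hq : 2 * (8 * (R.T1 : ℝ))⁻¹ * (R.T1 : ℝ) = 1 / 4 := by
            field_simp
            ring
          nlinarith [hinv, hX, hT1rpos, hq]
        linarith [hkey]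


end MABN
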